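/- Let E ∪ F be a union graph (an adjunction graph with injective attaching maps) in which the intersection graph E ∩ F is a regular closed subgraph of both E and F. Then E and F are regular closed subgraphs of E ∪ F. -/

import Mathlib

open Set Topology

/-- A continuous map which is proper: preimages of compact sets are compact. -/
def ProperCont {X Y : Type*} [TopologicalSpace X] [TopologicalSpace Y] (f : X → Y) : Prop :=
  Continuous f ∧ ∀ K : Set Y, IsCompact K → IsCompact (f ⁻¹' K)

/-- The raw data of a (topological) graph: a source and a range map from edges to vertices. -/
structure GraphData (V E : Type*) where
  s : E → V
  r : E → V

/-- `g` is a topological graph: source and range are continuous and the range map is a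
local homeomorphism. -/
structure IsTopGraph {V E : Type*} [TopologicalSpace V] [TopologicalSpace E]
    (g : GraphData V E) : Prop where
  s_cont : Continuous g.s
  r_cont : Continuous g.r
  r_locHomeo : IsLocalHomeomorph g.r

namespace GraphData

variable {V E : Type*} [TopologicalSpace V] [TopologicalSpace E]

/-- `E⁰_fin`: vertices having a neighborhood whose preimage under the source map is compact. -/
def finSet (g : GraphData V E) : Set V := {v | ∃ U ∈ nhds v, IsCompact (g.s ⁻¹' U)}

/-- `E⁰_sink = E⁰ \ closure (s(E¹))`. -/
def sinkSet (g : GraphData V E) : Set V := (closure (Set.range g.s))ᶜ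

/-- `E⁰_reg = E⁰_fin \ closure (E⁰_sink)`. -/
def regSet (g : GraphData V E) : Set V := g.finSet \ closure g.sinkSet

/-- `E⁰_sing = E⁰ \ E⁰_reg`. -/
def singSet (g : GraphData V E) : Set V := (g.regSet)ᶜ

/-- A set of vertices is negatively invariant if every regular vertex in it emits an
edge whose range lies in it. -/
def NegInvariant (g : GraphData V E) (Y : Set V) : Prop :=
  ∀ v ∈ Y ∩ g.regSet, ∃ e, g.s e = v ∧ g.r e ∈ Y

/-- A topological graph is row-finite if `s(E¹) = E⁰_reg`. -/
def RowFinite (g : GraphData V E) : Prop := Set.range g.s = g.regSet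

/-- The restriction of a graph to a pair of subsets of vertices and edges. -/
def restrict (g : GraphData V E) (G0 : Set V) (G1 : Set E)
    (hs : Set.MapsTo g.s G1 G0) (hr : Set.MapsTo g.r G1 G0) : GraphData G0 G1 where
  s := fun e => ⟨g.s e, hs e.2⟩
  r := fun e => ⟨g.r e, hr e.2⟩

end GraphData

/-- `(G0, G1)` determines a closed subgraph of `g` (in particular it is itself
a topological graph with the restricted source and range maps). -/
structure IsClosedSubgraph {V E : Type*} [TopologicalSpace V] [TopologicalSpace E]
    (g : GraphData V E) (G0 : Set V) (G1 : Set E) : Prop where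
  s_maps : Set.MapsTo g.s G1 G0
  r_maps : Set.MapsTo g.r G1 G0
  closed0 : IsClosed G0
  closed1 : IsClosed G1
  isGraph : IsTopGraph (g.restrict G0 G1 s_maps r_maps)

/-- A regular closed subgraph: a closed subgraph whose vertex set is negatively invariant
and such that `r⁻¹(G⁰) ⊆ G¹`. -/
structure IsRegularClosedSubgraph {V E : Type*} [TopologicalSpace V] [TopologicalSpace E]
    (g : GraphData V E) (G0 : Set V) (G1 : Set E) extends IsClosedSubgraph g G0 G1 : Prop where
  negInv : g.NegInvariant G0
  r_pre : g.r ⁻¹' G0 ⊆ G1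

/-- A regular factor map `(m¹, m⁰) : gG → gF` between topological graphs: a pair of proper
continuous maps satisfying (F1), (F2) and (F3). -/
structure IsRegularFactorMap {V1 E1 V2 E2 : Type*}
    [TopologicalSpace V1] [TopologicalSpace E1] [TopologicalSpace V2] [TopologicalSpace E2]
    (gG : GraphData V1 E1) (gF : GraphData V2 E2) (m0 : V1 → V2) (m1 : E1 → E2) : Prop where
  proper0 : ProperCont m0
  proper1 : ProperCont m1
  F1r : ∀ e, gF.r (m1 e) = m0 (gG.r e)
  F1s : ∀ e, gF.s (m1 e) = m0 (gG.s e)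
  F2 : ∀ (x : E2) (v : V1), gF.r x = m0 v → ∃! e : E1, m1 e = x ∧ gG.r e = v
  F3 : m0 '' gG.singSet ⊆ gF.singSet

section Adjunction

/-- The relation generating the adjunction-space identification: `a ∈ A ⊆ Y` is glued
to `f a ∈ X`. -/
inductive AdjRel {X Y : Type*} {A : Set Y} (f : A → X) : X ⊕ Y → X ⊕ Y → Prop
  | glue (a : A) : AdjRel f (Sum.inl (f a)) (Sum.inr a.1)

/-- The adjunction space `X ∪_f Y`. -/
def AdjSpace {X Y : Type*} {A : Set Y} (f : A → X) : Type _ := Quot (AdjRel f)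

instance {X Y : Type*} [TopologicalSpace X] [TopologicalSpace Y] {A : Set Y} (f : A → X) :
    TopologicalSpace (AdjSpace f) :=
  inferInstanceAs (TopologicalSpace (Quot (AdjRel f)))

/-- The canonical (closed) embedding `X → X ∪_f Y`. -/
def adjInc {X Y : Type*} {A : Set Y} (f : A → X) : X → AdjSpace f :=
  fun x => Quot.mk _ (Sum.inl x)

/-- The canonical map `p : Y → X ∪_f Y`. -/
def adjP {X Y : Type*} {A : Set Y} (f : A → X) : Y → AdjSpace f :=
  fun y => Quot.mk _ (Sum.inr y)

variable {VE EE VF EF : Type*}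

/-- The source map `s_∪` of the adjunction graph `E ∪_m F`. -/
def adjS (gE : GraphData VE EE) (gF : GraphData VF EF) {G0 : Set VF} {G1 : Set EF}
    (m0 : G0 → VE) (m1 : G1 → EE) (hs : Set.MapsTo gF.s G1 G0)
    (hF1s : ∀ e : G1, gE.s (m1 e) = m0 ⟨gF.s e, hs e.2⟩) :
    AdjSpace m1 → AdjSpace m0 :=
  Quot.lift
    (fun x => match x with
      | Sum.inl e => adjInc m0 (gE.s e)
      | Sum.inr e => adjP m0 (gF.s e))
    (by
      rintro _ _ ⟨a⟩
      show adjInc m0 (gE.s (m1 a)) = adjP m0 (gF.s a.1)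
      rw [hF1s a]
      exact Quot.sound (AdjRel.glue ⟨gF.s a.1, hs a.2⟩))

/-- The range map `r_∪` of the adjunction graph `E ∪_m F`. -/
def adjR (gE : GraphData VE EE) (gF : GraphData VF EF) {G0 : Set VF} {G1 : Set EF}
    (m0 : G0 → VE) (m1 : G1 → EE) (hr : Set.MapsTo gF.r G1 G0)
    (hF1r : ∀ e : G1, gE.r (m1 e) = m0 ⟨gF.r e, hr e.2⟩) :
    AdjSpace m1 → AdjSpace m0 :=
  Quot.lift
    (fun x => match x with
      | Sum.inl e => adjInc m0 (gE.r e)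
      | Sum.inr e => adjP m0 (gF.r e))
    (by
      rintro _ _ ⟨a⟩
      show adjInc m0 (gE.r (m1 a)) = adjP m0 (gF.r a.1)
      rw [hF1r a]
      exact Quot.sound (AdjRel.glue ⟨gF.r a.1, hr a.2⟩))

/-- The adjunction graph `E ∪_m F`, obtained by attaching the topological graph `F` to the
topological graph `E` along a closed subgraph `(G0, G1)` of `F` via the pair `(m¹, m⁰)`. -/
def adjGraph (gE : GraphData VE EE) (gF : GraphData VF EF) {G0 : Set VF} {G1 : Set EF}
    (m0 : G0 → VE) (m1 : G1 → EE)
    (hs : Set.MapsTo gF.s G1 G0) (hr : Set.MapsTo gF.r G1 G0)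
    (hF1s : ∀ e : G1, gE.s (m1 e) = m0 ⟨gF.s e, hs e.2⟩)
    (hF1r : ∀ e : G1, gE.r (m1 e) = m0 ⟨gF.r e, hr e.2⟩) :
    GraphData (AdjSpace m0) (AdjSpace m1) where
  s := adjS gE gF m0 m1 hs hF1s
  r := adjR gE gF m0 m1 hr hF1r

end Adjunction

section AdjAux

variable {X Y : Type*} {A : Set Y} {f : A → X}

/-- Normal form of an element of `X ⊕ Y` with respect to the gluing relation. -/
private noncomputable def adjNorm (f : A → X) : X ⊕ Y → X ⊕ Y
  | .inl x => .inl x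
  | .inr y =>
    haveI := Classical.dec (y ∈ A)
    if h : y ∈ A then .inl (f ⟨y, h⟩) else .inr y

/-- A well-defined "class representative" map on the adjunction space. -/
private noncomputable def adjClass (f : A → X) : AdjSpace f → X ⊕ Y :=
  Quot.lift (adjNorm f) (by
    rintro _ _ ⟨a⟩
    show Sum.inl (f a) = adjNorm f (.inr a.1)
    simp only [adjNorm]
    rw [dif_pos a.2])

private lemma adjClass_mk (c : X ⊕ Y) : adjClass f (Quot.mk _ c) = adjNorm f c := rfl

lemma adjInc_injective : Function.Injective (adjInc f) := by
  intro a b h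
  have h2 : adjNorm f (Sum.inl a) = adjNorm f (Sum.inl b) := congrArg (adjClass f) h
  simp only [adjNorm] at h2
  exact Sum.inl.inj h2

lemma adjInc_eq_adjP_iff {x : X} {y : Y} :
    adjInc f x = adjP f y ↔ ∃ h : y ∈ A, f ⟨y, h⟩ = x := by
  constructor
  · intro h
    have h2 : adjNorm f (Sum.inl x) = adjNorm f (Sum.inr y) := congrArg (adjClass f) h
    simp only [adjNorm] at h2
    by_cases hy : y ∈ A
    · rw [dif_pos hy] at h2
      exact ⟨hy, (Sum.inl.inj h2).symm⟩
    · rw [dif_neg hy] at h2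
      exact absurd h2 (by simp)
  · rintro ⟨h, rfl⟩
    exact Quot.sound (AdjRel.glue ⟨y, h⟩)

lemma adjP_injective (hinj : Function.Injective f) : Function.Injective (adjP f) := by
  intro a b h
  by_cases ha : a ∈ A
  · have h1 : adjInc f (f ⟨a, ha⟩) = adjP f a := adjInc_eq_adjP_iff.2 ⟨ha, rfl⟩
    obtain ⟨hb, hfb⟩ := adjInc_eq_adjP_iff.1 (h1.trans h)
    exact congrArg Subtype.val (hinj hfb.symm)
  · by_cases hb : b ∈ A
    · have h1 : adjInc f (f ⟨b, hb⟩) = adjP f b := adjInc_eq_adjP_iff.2 ⟨hb, rfl⟩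
      obtain ⟨ha', _⟩ := adjInc_eq_adjP_iff.1 (h1.trans h.symm)
      exact absurd ha' ha
    · have h2 : adjNorm f (Sum.inr a) = adjNorm f (Sum.inr b) := congrArg (adjClass f) h
      simp only [adjNorm] at h2
      rw [dif_neg ha, dif_neg hb] at h2
      exact Sum.inr.inj h2

lemma adjP_mem_range_adjInc {y : Y} :
    adjP f y ∈ Set.range (adjInc f) ↔ y ∈ A := by
  constructor
  · rintro ⟨x, hx⟩
    obtain ⟨h, -⟩ := adjInc_eq_adjP_iff.1 hx
    exact h
  · intro h
    exact ⟨f ⟨y, h⟩, adjInc_eq_adjP_iff.2 ⟨h, rfl⟩⟩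

lemma adjInc_mem_range_adjP {x : X} :
    adjInc f x ∈ Set.range (adjP f) ↔ x ∈ Set.range f := by
  constructor
  · rintro ⟨y, hy⟩
    obtain ⟨h, hf⟩ := adjInc_eq_adjP_iff.1 hy.symm
    exact ⟨⟨y, h⟩, hf⟩
  · rintro ⟨a, rfl⟩
    exact ⟨a.1, (adjInc_eq_adjP_iff.2 ⟨a.2, rfl⟩).symm⟩

lemma adjSpace_cases (p : AdjSpace f) :
    (∃ x, p = adjInc f x) ∨ (∃ y, p = adjP f y) := by
  obtain ⟨z, rfl⟩ := Quot.exists_rep p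
  cases z with
  | inl x => exact Or.inl ⟨x, rfl⟩
  | inr y => exact Or.inr ⟨y, rfl⟩

variable [TopologicalSpace X] [TopologicalSpace Y]

lemma continuous_adjInc : Continuous (adjInc f) :=
  (continuous_quot_mk).comp continuous_inl

lemma continuous_adjP : Continuous (adjP f) :=
  (continuous_quot_mk).comp continuous_inr

lemma adjQuot_sat (hinj : Function.Injective f) (C : Set (X ⊕ Y)) :
    Quot.mk (AdjRel f) ⁻¹' (Quot.mk (AdjRel f) '' C) =
      (C ∪ Sum.inl '' (f '' (Subtype.val ⁻¹' (Sum.inr ⁻¹' C))))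
        ∪ Sum.inr '' (Subtype.val '' (f ⁻¹' (Sum.inl ⁻¹' C))) := by
  ext z
  constructor
  · rintro ⟨c, hc, hqc⟩
    have h : adjNorm f c = adjNorm f z := congrArg (adjClass f) hqc
    match z, c with
    | Sum.inl x, Sum.inl x' =>
      simp only [adjNorm] at h
      exact Or.inl (Or.inl (by rwa [Sum.inl.inj h] at hc))
    | Sum.inl x, Sum.inr y' =>
      simp only [adjNorm] at h
      by_cases hy' : y' ∈ A
      · rw [dif_pos hy'] at h
        exact Or.inl (Or.inr ⟨f ⟨y', hy'⟩, ⟨⟨y', hy'⟩, hc, rfl⟩, h⟩)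
      · rw [dif_neg hy'] at h
        exact absurd h (by simp)
    | Sum.inr y, Sum.inl x' =>
      simp only [adjNorm] at h
      by_cases hy : y ∈ A
      · rw [dif_pos hy] at h
        refine Or.inr ⟨y, ⟨⟨y, hy⟩, ?_, rfl⟩, rfl⟩
        show Sum.inl (f ⟨y, hy⟩) ∈ C
        rwa [← Sum.inl.inj h]
      · rw [dif_neg hy] at h
        exact absurd h (by simp)
    | Sum.inr y, Sum.inr y' =>
      simp only [adjNorm] at h
      by_cases hy : y ∈ A
      · by_cases hy' : y' ∈ A
        · rw [dif_pos hy', dif_pos hy] at h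
          have hyy : y' = y := congrArg Subtype.val (hinj (Sum.inl.inj h))
          exact Or.inl (Or.inl (by rwa [hyy] at hc))
        · rw [dif_neg hy', dif_pos hy] at h
          exact absurd h (by simp)
      · by_cases hy' : y' ∈ A
        · rw [dif_pos hy', dif_neg hy] at h
          exact absurd h (by simp)
        · rw [dif_neg hy', dif_neg hy] at h
          exact Or.inl (Or.inl (by rwa [Sum.inr.inj h] at hc))
  · rintro ((hz | ⟨_, ⟨a, ha, rfl⟩, rfl⟩) | ⟨_, ⟨a, ha, rfl⟩, rfl⟩)
    · exact ⟨z, hz, rfl⟩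
    · exact ⟨Sum.inr a.1, ha, (Quot.sound (AdjRel.glue a)).symm⟩
    · exact ⟨Sum.inl (f a), ha, Quot.sound (AdjRel.glue a)⟩

lemma isClosedMap_adjQuot (hA : IsClosed A) (hfc : Continuous f)
    (hfm : IsClosedMap f) (hinj : Function.Injective f) :
    IsClosedMap (Quot.mk (AdjRel f)) := by
  intro C hC
  rw [← isQuotientMap_quot_mk.isClosed_preimage, adjQuot_sat hinj]
  have h1 : IsClosed (Sum.inl '' (f '' (Subtype.val ⁻¹' (Sum.inr ⁻¹' C))) : Set (X ⊕ Y)) :=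
    Topology.IsClosedEmbedding.inl.isClosedMap _
      (hfm _ ((hC.preimage continuous_inr).preimage continuous_subtype_val))
  have h2 : IsClosed (Sum.inr '' (Subtype.val '' (f ⁻¹' (Sum.inl ⁻¹' C))) : Set (X ⊕ Y)) :=
    Topology.IsClosedEmbedding.inr.isClosedMap _
      (hA.isClosedEmbedding_subtypeVal.isClosedMap _ ((hC.preimage continuous_inl).preimage hfc))
  exact (hC.union h1).union h2

lemma isClosedEmbedding_adjInc (hA : IsClosed A) (hfc : Continuous f)
    (hfm : IsClosedMap f) (hinj : Function.Injective f) :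
    Topology.IsClosedEmbedding (adjInc f) :=
  Topology.IsClosedEmbedding.of_continuous_injective_isClosedMap continuous_adjInc
    adjInc_injective
    ((isClosedMap_adjQuot hA hfc hfm hinj).comp Topology.IsClosedEmbedding.inl.isClosedMap)

lemma isClosedEmbedding_adjP (hA : IsClosed A) (hfc : Continuous f)
    (hfm : IsClosedMap f) (hinj : Function.Injective f) :
    Topology.IsClosedEmbedding (adjP f) :=
  Topology.IsClosedEmbedding.of_continuous_injective_isClosedMap continuous_adjP
    (adjP_injective hinj)
    ((isClosedMap_adjQuot hA hfc hfm hinj).comp Topology.IsClosedEmbedding.inr.isClosedMap)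

end AdjAux

section GraphAux

variable {V E V' E' : Type*} [TopologicalSpace V] [TopologicalSpace E]
  [TopologicalSpace V'] [TopologicalSpace E']

lemma GraphData.finSet_of_map {g : GraphData V E} {g' : GraphData V' E'}
    {φ0 : V' → V} {φ1 : E' → E} (h0 : Continuous φ0)
    (h1 : ∀ K : Set E, IsCompact K → IsCompact (φ1 ⁻¹' K))
    (hs : ∀ e, g.s (φ1 e) = φ0 (g'.s e)) {w : V'}
    (hw : φ0 w ∈ g.finSet) : w ∈ g'.finSet := by
  obtain ⟨U, hU, hK⟩ := hw
  refine ⟨φ0 ⁻¹' U, h0.continuousAt.preimage_mem_nhds hU, ?_⟩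
  have heq : g'.s ⁻¹' (φ0 ⁻¹' U) = φ1 ⁻¹' (g.s ⁻¹' U) := by
    ext e
    simp only [Set.mem_preimage, ← hs e]
  rw [heq]
  exact h1 _ hK

lemma GraphData.mem_range_s_of_finSet [T2Space V] {g : GraphData V E}
    (hc : Continuous g.s) {v : V} (h1 : v ∈ g.finSet)
    (h2 : v ∈ closure (Set.range g.s)) : v ∈ Set.range g.s := by
  obtain ⟨U, hU, hK⟩ := h1
  have hKc : IsCompact (g.s '' (g.s ⁻¹' U)) := hK.image hc
  by_contra hv
  have hvim : v ∉ g.s '' (g.s ⁻¹' U) := fun ⟨e, _, hev⟩ => hv ⟨e, hev⟩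
  have hnb : interior U ∩ (g.s '' (g.s ⁻¹' U))ᶜ ∈ nhds v :=
    Filter.inter_mem (interior_mem_nhds.2 hU) (hKc.isClosed.isOpen_compl.mem_nhds hvim)
  obtain ⟨x, hx1, hx2⟩ := mem_closure_iff_nhds.1 h2 _ hnb
  obtain ⟨e, rfl⟩ := hx2
  exact hx1.2 ⟨e, Set.mem_preimage.2 (interior_subset hx1.1), rfl⟩

lemma IsClosedMap.closure_image' {f : V → E} (hm : IsClosedMap f) (hc : Continuous f)
    (S : Set V) : closure (f '' S) = f '' closure S :=
  Set.Subset.antisymm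
    (closure_minimal (Set.image_mono subset_closure) (hm _ isClosed_closure))
    (image_closure_subset_closure_image hc)

lemma isTopGraph_restrict {g : GraphData V E} {g' : GraphData V' E'}
    (hg' : IsTopGraph g') {φ0 : V' → V} {φ1 : E' → E}
    (h0 : Topology.IsEmbedding φ0) (h1 : Topology.IsEmbedding φ1)
    (hs : ∀ e, g.s (φ1 e) = φ0 (g'.s e)) (hr : ∀ e, g.r (φ1 e) = φ0 (g'.r e))
    (hms : Set.MapsTo g.s (Set.range φ1) (Set.range φ0))
    (hmr : Set.MapsTo g.r (Set.range φ1) (Set.range φ0)) :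
    IsTopGraph (g.restrict (Set.range φ0) (Set.range φ1) hms hmr) := by
  let e0 : V' ≃ₜ Set.range φ0 := h0.toHomeomorph
  let e1 : E' ≃ₜ Set.range φ1 := h1.toHomeomorph
  have hval1 : ∀ x : Set.range φ1, φ1 (e1.symm x) = x.1 := fun x =>
    Equiv.apply_ofInjective_symm h1.injective x
  have hval0 : ∀ y : V', ((e0 y : Set.range φ0) : V) = φ0 y := fun y => rfl
  have hse : (g.restrict (Set.range φ0) (Set.range φ1) hms hmr).s
      = ⇑e0 ∘ g'.s ∘ ⇑e1.symm := by
    funext x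
    apply Subtype.ext
    show g.s x.1 = _
    rw [← hval1 x, hs (e1.symm x)]
    rfl
  have hre : (g.restrict (Set.range φ0) (Set.range φ1) hms hmr).r
      = ⇑e0 ∘ g'.r ∘ ⇑e1.symm := by
    funext x
    apply Subtype.ext
    show g.r x.1 = _
    rw [← hval1 x, hr (e1.symm x)]
    rfl
  constructor
  · rw [hse]
    exact e0.continuous.comp (hg'.s_cont.comp e1.symm.continuous)
  · rw [hre]
    exact e0.continuous.comp (hg'.r_cont.comp e1.symm.continuous)
  · rw [hre]
    exact (e0.isLocalHomeomorph.comp hg'.r_locHomeo).comp e1.symm.isLocalHomeomorph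

end GraphAux

/-- Let `E ∪ F` be a union graph (an adjunction graph with injective attaching maps) in
which the intersection graph `E ∩ F` (here `(G0, G1)` inside `F`, realized inside `E` via
the injective maps `m⁰`, `m¹`) is a regular closed subgraph of both `E` and `F`.
Then `E` and `F` are regular closed subgraphs of `E ∪ F`. -/
theorem unionGraph_regularClosedSubgraphs
    {VE EE VF EF : Type*} [TopologicalSpace VE] [TopologicalSpace EE]
    [TopologicalSpace VF] [TopologicalSpace EF]
    [LocallyCompactSpace VE] [T2Space VE] [LocallyCompactSpace EE] [T2Space EE]
    [LocallyCompactSpace VF] [T2Space VF] [LocallyCompactSpace EF] [T2Space EF]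
    (gE : GraphData VE EE) (gF : GraphData VF EF)
    (hE : IsTopGraph gE) (hF : IsTopGraph gF)
    {G0 : Set VF} {G1 : Set EF}
    (hGF : IsRegularClosedSubgraph gF G0 G1)
    (m0 : G0 → VE) (m1 : G1 → EE) (hm0 : ProperCont m0) (hm1 : ProperCont m1)
    (hinj0 : Function.Injective m0) (hinj1 : Function.Injective m1)
    (hF1s : ∀ e : G1, gE.s (m1 e) = m0 ⟨gF.s e, hGF.s_maps e.2⟩)
    (hF1r : ∀ e : G1, gE.r (m1 e) = m0 ⟨gF.r e, hGF.r_maps e.2⟩)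
    (hGE : IsRegularClosedSubgraph gE (Set.range m0) (Set.range m1)) :
    IsRegularClosedSubgraph (adjGraph gE gF m0 m1 hGF.s_maps hGF.r_maps hF1s hF1r)
        (Set.range (adjInc m0)) (Set.range (adjInc m1)) ∧
    IsRegularClosedSubgraph (adjGraph gE gF m0 m1 hGF.s_maps hGF.r_maps hF1s hF1r)
        (Set.range (adjP m0)) (Set.range (adjP m1)) := by
  classical
  set gU := adjGraph gE gF m0 m1 hGF.s_maps hGF.r_maps hF1s hF1r with hgU
  -- basic properness / closed embeddings
  have hpm0 : IsProperMap m0 :=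
    isProperMap_iff_isCompact_preimage.mpr ⟨hm0.1, fun K hK => hm0.2 K hK⟩
  have hpm1 : IsProperMap m1 :=
    isProperMap_iff_isCompact_preimage.mpr ⟨hm1.1, fun K hK => hm1.2 K hK⟩
  have hcl0 : IsClosedEmbedding (adjInc m0) :=
    isClosedEmbedding_adjInc hGF.closed0 hm0.1 hpm0.isClosedMap hinj0
  have hclP0 : IsClosedEmbedding (adjP m0) :=
    isClosedEmbedding_adjP hGF.closed0 hm0.1 hpm0.isClosedMap hinj0
  have hcl1 : IsClosedEmbedding (adjInc m1) :=
    isClosedEmbedding_adjInc hGF.closed1 hm1.1 hpm1.isClosedMap hinj1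
  have hclP1 : IsClosedEmbedding (adjP m1) :=
    isClosedEmbedding_adjP hGF.closed1 hm1.1 hpm1.isClosedMap hinj1
  -- pointwise descriptions of the union source/range maps
  have hsE : ∀ e : EE, gU.s (adjInc m1 e) = adjInc m0 (gE.s e) := fun e => rfl
  have hsF : ∀ e : EF, gU.s (adjP m1 e) = adjP m0 (gF.s e) := fun e => rfl
  have hrE : ∀ e : EE, gU.r (adjInc m1 e) = adjInc m0 (gE.r e) := fun e => rfl
  have hrF : ∀ e : EF, gU.r (adjP m1 e) = adjP m0 (gF.r e) := fun e => rfl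
  -- MapsTo statements
  have hmsE : Set.MapsTo gU.s (Set.range (adjInc m1)) (Set.range (adjInc m0)) := by
    rintro _ ⟨e, rfl⟩; exact ⟨gE.s e, (hsE e).symm⟩
  have hmrE : Set.MapsTo gU.r (Set.range (adjInc m1)) (Set.range (adjInc m0)) := by
    rintro _ ⟨e, rfl⟩; exact ⟨gE.r e, (hrE e).symm⟩
  have hmsF : Set.MapsTo gU.s (Set.range (adjP m1)) (Set.range (adjP m0)) := by
    rintro _ ⟨e, rfl⟩; exact ⟨gF.s e, (hsF e).symm⟩
  have hmrF : Set.MapsTo gU.r (Set.range (adjP m1)) (Set.range (adjP m0)) := by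
    rintro _ ⟨e, rfl⟩; exact ⟨gF.r e, (hrF e).symm⟩
  -- the range of the union source map and its closure
  have hrange : Set.range gU.s
      = adjInc m0 '' Set.range gE.s ∪ adjP m0 '' Set.range gF.s := by
    ext p
    constructor
    · rintro ⟨x, rfl⟩
      rcases adjSpace_cases x with ⟨e, rfl⟩ | ⟨e, rfl⟩
      · exact Or.inl ⟨gE.s e, ⟨e, rfl⟩, (hsE e).symm⟩
      · exact Or.inr ⟨gF.s e, ⟨e, rfl⟩, (hsF e).symm⟩
    · rintro (⟨_, ⟨e, rfl⟩, rfl⟩ | ⟨_, ⟨e, rfl⟩, rfl⟩)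
      · exact ⟨adjInc m1 e, hsE e⟩
      · exact ⟨adjP m1 e, hsF e⟩
  have hclrange : closure (Set.range gU.s)
      = adjInc m0 '' closure (Set.range gE.s) ∪ adjP m0 '' closure (Set.range gF.s) := by
    rw [hrange, closure_union, hcl0.isClosedMap.closure_image' hcl0.continuous,
      hclP0.isClosedMap.closure_image' hclP0.continuous]
  -- the auxiliary closed sets C ⊆ VF and D ⊆ VE
  set clE := closure (Set.range gE.s) with hclE
  set clF := closure (Set.range gF.s) with hclF
  set D : Set VE := m0 '' (Subtype.val ⁻¹' clF) with hD
  set C : Set VF := Subtype.val '' (m0 ⁻¹' clE) with hC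
  have hDclosed : IsClosed D :=
    hpm0.isClosedMap _ (isClosed_closure.preimage continuous_subtype_val)
  have hCclosed : IsClosed C :=
    hGF.closed0.isClosedEmbedding_subtypeVal.isClosedMap _ (isClosed_closure.preimage hm0.1)
  set A : Set VE := clEᶜ ∩ Dᶜ with hA
  set B : Set VF := clFᶜ ∩ Cᶜ with hB
  have hsinkE : gE.sinkSet ⊆ A ∪ D := by
    intro x hx
    by_cases hxD : x ∈ D
    · exact Or.inr hxD
    · exact Or.inl ⟨hx, hxD⟩
  have hsinkF : gF.sinkSet ⊆ B ∪ C := by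
    intro y hy
    by_cases hyC : y ∈ C
    · exact Or.inr hyC
    · exact Or.inl ⟨hy, hyC⟩
  have hAsink : adjInc m0 '' A ⊆ gU.sinkSet := by
    rintro _ ⟨x, ⟨hx1, hx2⟩, rfl⟩
    show adjInc m0 x ∉ closure (Set.range gU.s)
    rw [hclrange]
    rintro (⟨x', hx', hxx⟩ | ⟨y, hy, hxy⟩)
    · exact hx1 (adjInc_injective hxx ▸ hx')
    · obtain ⟨h, hfy⟩ := adjInc_eq_adjP_iff.1 hxy.symm
      exact hx2 ⟨⟨y, h⟩, hy, hfy⟩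
  have hBsink : adjP m0 '' B ⊆ gU.sinkSet := by
    rintro _ ⟨y, ⟨hy1, hy2⟩, rfl⟩
    show adjP m0 y ∉ closure (Set.range gU.s)
    rw [hclrange]
    rintro (⟨x', hx', hxx⟩ | ⟨y', hy', hyy⟩)
    · obtain ⟨h, hfy⟩ := adjInc_eq_adjP_iff.1 hxx
      exact hy2 ⟨⟨y, h⟩, by rw [Set.mem_preimage, hfy]; exact hx', rfl⟩
    · exact hy1 (adjP_injective hinj0 hyy ▸ hy')
  -- finiteness transfers
  have hfinE : ∀ w : VE, adjInc m0 w ∈ gU.finSet → w ∈ gE.finSet := fun w h =>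
    GraphData.finSet_of_map hcl0.continuous
      (fun K hK => hcl1.isProperMap.isCompact_preimage hK) hsE h
  have hfinF : ∀ y : VF, adjP m0 y ∈ gU.finSet → y ∈ gF.finSet := fun y h =>
    GraphData.finSet_of_map hclP0.continuous
      (fun K hK => hclP1.isProperMap.isCompact_preimage hK) hsF h
  -- regular vertices are in the closure of the range of the source map
  have hregcl : ∀ v : AdjSpace m0, v ∈ gU.regSet → v ∈ closure (Set.range gU.s) := by
    intro v hv
    by_contra h
    exact hv.2 (subset_closure h)
  constructor
  · -- E is a regular closed subgraph
    refine ⟨⟨hmsE, hmrE, hcl0.isClosed_range, hcl1.isClosed_range,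
      isTopGraph_restrict hE hcl0.isEmbedding hcl1.isEmbedding hsE hrE hmsE hmrE⟩, ?_, ?_⟩
    · -- negative invariance
      rintro v ⟨⟨w, rfl⟩, hfin, hnsink⟩
      have hwfin : w ∈ gE.finSet := hfinE w hfin
      by_cases hwcl : w ∈ clE
      · obtain ⟨e, he⟩ := GraphData.mem_range_s_of_finSet hE.s_cont hwfin hwcl
        exact ⟨adjInc m1 e, by rw [hsE, he], by rw [hrE]; exact ⟨gE.r e, rfl⟩⟩
      · have hvs : adjInc m0 w ∈ closure (Set.range gU.s) := hregcl _ ⟨hfin, hnsink⟩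
        rw [hclrange] at hvs
        rcases hvs with ⟨x', hx', hxx⟩ | ⟨y, hy, hxy⟩
        · exact absurd (adjInc_injective hxx ▸ hx') hwcl
        · obtain ⟨hyG, hfy⟩ := adjInc_eq_adjP_iff.1 hxy.symm
          have hyfin : y ∈ gF.finSet := hfinF y (by rw [hxy]; exact hfin)
          have hyC : y ∉ C := by
            rintro ⟨a, ha, hav⟩
            have : a = ⟨y, hyG⟩ := Subtype.ext hav
            rw [this] at ha
            exact hwcl (hfy ▸ ha)
          have hyB : y ∉ closure B := by
            intro hyB
            apply hnsink
            have h1 : adjInc m0 w ∈ adjP m0 '' closure B := ⟨y, hyB, hxy⟩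
            rw [← hclP0.isClosedMap.closure_image' hclP0.continuous] at h1
            exact closure_mono hBsink h1
          have hyreg : y ∈ gF.regSet := by
            refine ⟨hyfin, fun hcon => ?_⟩
            have h1 : closure gF.sinkSet ⊆ closure B ∪ C := by
              have := closure_mono hsinkF
              rwa [closure_union, hCclosed.closure_eq] at this
            rcases h1 hcon with h | h
            · exact hyB h
            · exact hyC h
          obtain ⟨e, hse, hre⟩ := hGF.negInv y ⟨hyG, hyreg⟩
          refine ⟨adjP m1 e, ?_, ?_⟩
          · rw [hsF, hse, hxy]
          · rw [hrF]
            exact adjP_mem_range_adjInc.2 hre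
    · -- r-preimage condition
      intro x hx
      rcases adjSpace_cases x with ⟨e, rfl⟩ | ⟨e, rfl⟩
      · exact ⟨e, rfl⟩
      · rw [Set.mem_preimage, hrF] at hx
        have h1 : gF.r e ∈ G0 := adjP_mem_range_adjInc.1 hx
        have h2 : e ∈ G1 := hGF.r_pre h1
        exact ⟨m1 ⟨e, h2⟩, adjInc_eq_adjP_iff.2 ⟨h2, rfl⟩⟩
  · -- F is a regular closed subgraph
    refine ⟨⟨hmsF, hmrF, hclP0.isClosed_range, hclP1.isClosed_range,
      isTopGraph_restrict hF hclP0.isEmbedding hclP1.isEmbedding hsF hrF hmsF hmrF⟩, ?_, ?_⟩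
    · -- negative invariance
      rintro v ⟨⟨y, rfl⟩, hfin, hnsink⟩
      have hyfin : y ∈ gF.finSet := hfinF y hfin
      by_cases hycl : y ∈ clF
      · obtain ⟨e, he⟩ := GraphData.mem_range_s_of_finSet hF.s_cont hyfin hycl
        exact ⟨adjP m1 e, by rw [hsF, he], by rw [hrF]; exact ⟨gF.r e, rfl⟩⟩
      · have hvs : adjP m0 y ∈ closure (Set.range gU.s) := hregcl _ ⟨hfin, hnsink⟩
        rw [hclrange] at hvs
        rcases hvs with ⟨x, hx, hxy⟩ | ⟨y', hy', hyy⟩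
        · obtain ⟨hyG, rfl⟩ := adjInc_eq_adjP_iff.1 hxy
          -- x = m0 ⟨y, hyG⟩ ∈ clE
          have hwfin : m0 ⟨y, hyG⟩ ∈ gE.finSet := hfinE _ (by rw [hxy]; exact hfin)
          have hwD : m0 ⟨y, hyG⟩ ∉ D := by
            rintro ⟨a, ha, hav⟩
            have : a = ⟨y, hyG⟩ := hinj0 hav
            rw [this] at ha
            exact hycl ha
          have hwA : m0 ⟨y, hyG⟩ ∉ closure A := by
            intro hwA
            apply hnsink
            have h1 : adjP m0 y ∈ adjInc m0 '' closure A := ⟨m0 ⟨y, hyG⟩, hwA, hxy⟩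
            rw [← hcl0.isClosedMap.closure_image' hcl0.continuous] at h1
            exact closure_mono hAsink h1
          have hwreg : m0 ⟨y, hyG⟩ ∈ gE.regSet := by
            refine ⟨hwfin, fun hcon => ?_⟩
            have h1 : closure gE.sinkSet ⊆ closure A ∪ D := by
              have := closure_mono hsinkE
              rwa [closure_union, hDclosed.closure_eq] at this
            rcases h1 hcon with h | h
            · exact hwA h
            · exact hwD h
          obtain ⟨e, hse, hre⟩ := hGE.negInv (m0 ⟨y, hyG⟩) ⟨⟨⟨y, hyG⟩, rfl⟩, hwreg⟩
          refine ⟨adjInc m1 e, ?_, ?_⟩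
          · rw [hsE, hse]
            exact hxy
          · rw [hrE]
            exact adjInc_mem_range_adjP.2 hre
        · exact absurd (adjP_injective hinj0 hyy ▸ hy') hycl
    · -- r-preimage condition
      intro x hx
      rcases adjSpace_cases x with ⟨e, rfl⟩ | ⟨e, rfl⟩
      · rw [Set.mem_preimage, hrE] at hx
        have h1 : gE.r e ∈ Set.range m0 := adjInc_mem_range_adjP.1 hx
        obtain ⟨a, rfl⟩ := hGE.r_pre h1
        exact ⟨a.1, (adjInc_eq_adjP_iff.2 ⟨a.2, rfl⟩).symm⟩
      · exact ⟨e, rfl⟩
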